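/- Let (Ω, F, P) be a probability space, let X : Ω → ℝ be a centered Gaussian random variable (its law is the Gaussian measure on ℝ with mean 0 and variance v ≥ 0), let Y : Ω → ℝ be any random variable, and fix θ ∈ ℝ. Then the function F : ℂ → ℂ defined by F(z) = E[exp(i θ (z X + Y))] is well defined (the integrand is integrable for every z ∈ ℂ, since |exp(iθ(zX+Y))| = exp(-θ·Im(z)·X)) and F is an entire function, with derivative F'(z) = E[i θ X exp(i θ (z X + Y))] at every z ∈ ℂ. -/

import Mathlib

open MeasureTheory ProbabilityTheory Complex

lemma aux_gauss_int (v : NNReal) (c : ℝ) :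
    Integrable (fun x => Real.exp (c * x)) (gaussianReal 0 v) := by
  by_cases hv : v = 0
  · subst hv
    rw [gaussianReal_zero_var]
    exact (integrable_const (Real.exp (c * 0))).congr (ae_eq_dirac (fun x => Real.exp (c * x))).symm
  · rw [gaussianReal_of_var_ne_zero _ hv, gaussianPDF_def]
    rw [integrable_withDensity_iff]
    rotate_left
    · exact (measurable_gaussianPDFReal 0 v).ennreal_ofReal
    · exact ae_of_all _ fun x => ENNReal.ofReal_lt_top
    have hv' : (0:ℝ) < (v:ℝ) := lt_of_le_of_ne v.2 (by exact_mod_cast (Ne.symm hv))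
    have hb : (0:ℝ) < (2 * (v:ℝ))⁻¹ := by positivity
    have h := ((integrable_exp_neg_mul_sq hb).comp_sub_right (c * v)).const_mul
      ((√(2 * Real.pi * v))⁻¹ * Real.exp (c^2 * v / 2))
    refine h.congr (ae_of_all _ fun x => ?_)
    simp only
    rw [ENNReal.toReal_ofReal (gaussianPDFReal_nonneg 0 v x)]
    simp only [gaussianPDFReal, sub_zero]
    have key : Real.exp (c ^ 2 * v / 2) * Real.exp (-(2 * (v:ℝ))⁻¹ * (x - c * v) ^ 2)
        = Real.exp (c * x) * Real.exp (-x ^ 2 / (2 * v)) := by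
      rw [← Real.exp_add, ← Real.exp_add]
      congr 1
      field_simp
      ring
    rw [mul_assoc, key]
    ring

lemma aux_norm_exp (θ : ℝ) (w : ℂ) (x y : ℝ) :
    ‖Complex.exp (Complex.I * (θ:ℂ) * (w * (x:ℂ) + (y:ℂ)))‖ = Real.exp (-(θ * w.im) * x) := by
  rw [Complex.norm_exp]
  congr 1
  simp [Complex.mul_re, Complex.mul_im]
  ring

/-- If `X` is a centered Gaussian random variable, `Y` is any random variable and `θ ∈ ℝ`,
then `F z = E[exp(i θ (z X + Y))]` is well defined (the integrand is integrable for every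
`z ∈ ℂ`) and `F` is entire, with derivative `F'(z) = E[i θ X exp(i θ (z X + Y))]`. -/
theorem stmt1 {Ω : Type*} [MeasurableSpace Ω] (P : Measure Ω) [IsProbabilityMeasure P]
    (X Y : Ω → ℝ) (hX : Measurable X) (hY : Measurable Y)
    (v : NNReal) (hGauss : Measure.map X P = gaussianReal 0 v) (θ : ℝ) :
    (∀ z : ℂ, Integrable (fun ω =>
        Complex.exp (Complex.I * (θ : ℂ) * (z * (X ω : ℂ) + (Y ω : ℂ)))) P) ∧
    (∀ z : ℂ, HasDerivAt
        (fun w : ℂ => ∫ ω, Complex.exp (Complex.I * (θ : ℂ) * (w * (X ω : ℂ) + (Y ω : ℂ))) ∂P)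
        (∫ ω, Complex.I * (θ : ℂ) * (X ω : ℂ) *
          Complex.exp (Complex.I * (θ : ℂ) * (z * (X ω : ℂ) + (Y ω : ℂ))) ∂P) z) := by
  have key : ∀ c : ℝ, Integrable (fun ω => Real.exp (c * X ω)) P := by
    intro c
    have h := aux_gauss_int v c
    rw [← hGauss] at h
    exact (integrable_map_measure (Measurable.aestronglyMeasurable (by fun_prop))
      hX.aemeasurable).mp h
  have key2 : ∀ c : ℝ, Integrable (fun ω => |X ω| * Real.exp (c * X ω)) P := by
    intro c
    refine ((key (c+1)).add (key (c-1))).mono'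
      (Measurable.aestronglyMeasurable (by fun_prop)) (ae_of_all _ fun ω => ?_)
    set x := X ω with hx
    rw [Real.norm_eq_abs, _root_.abs_of_nonneg (by positivity)]
    have h1 : x ≤ Real.exp x := by linarith [Real.add_one_le_exp x]
    have h2 : -x ≤ Real.exp (-x) := by linarith [Real.add_one_le_exp (-x)]
    have habs : |x| ≤ Real.exp x + Real.exp (-x) :=
      abs_le.mpr ⟨by nlinarith [Real.exp_pos x], by nlinarith [Real.exp_pos (-x)]⟩
    calc |x| * Real.exp (c * x) ≤ (Real.exp x + Real.exp (-x)) * Real.exp (c * x) :=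
          mul_le_mul_of_nonneg_right habs (Real.exp_nonneg _)
      _ = Real.exp ((c+1)*x) + Real.exp ((c-1)*x) := by
          rw [add_mul, ← Real.exp_add, ← Real.exp_add]; ring_nf
  have hmeasF : ∀ w : ℂ, AEStronglyMeasurable
      (fun ω => Complex.exp (Complex.I * (θ:ℂ) * (w * (X ω:ℂ) + (Y ω:ℂ)))) P := by
    intro w
    apply Measurable.aestronglyMeasurable
    fun_prop
  have hIntF : ∀ z : ℂ, Integrable (fun ω =>
      Complex.exp (Complex.I * (θ : ℂ) * (z * (X ω : ℂ) + (Y ω : ℂ)))) P := by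
    intro z
    exact (key (-(θ * z.im))).mono' (hmeasF z)
      (ae_of_all _ fun ω => le_of_eq (aux_norm_exp θ z (X ω) (Y ω)))
  refine ⟨hIntF, fun z => ?_⟩
  set c0 : ℝ := |θ| * (|z.im| + 1) with hc0
  have hc0nn : 0 ≤ c0 := by positivity
  have bound_int : Integrable (fun ω =>
      |θ| * (|X ω| * Real.exp (c0 * X ω)) + |θ| * (|X ω| * Real.exp (-c0 * X ω))) P :=
    ((key2 c0).const_mul |θ|).add ((key2 (-c0)).const_mul |θ|)
  have main := hasDerivAt_integral_of_dominated_loc_of_deriv_le (μ := P) (x₀ := z)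
    (F := fun w ω => Complex.exp (Complex.I * (θ:ℂ) * (w * (X ω:ℂ) + (Y ω:ℂ))))
    (F' := fun w ω => Complex.I * (θ:ℂ) * (X ω:ℂ) *
      Complex.exp (Complex.I * (θ:ℂ) * (w * (X ω:ℂ) + (Y ω:ℂ))))
    (bound := fun ω =>
      |θ| * (|X ω| * Real.exp (c0 * X ω)) + |θ| * (|X ω| * Real.exp (-c0 * X ω)))
    (Metric.ball_mem_nhds z one_pos) (Filter.Eventually.of_forall hmeasF) (hIntF z)
    (by apply Measurable.aestronglyMeasurable; fun_prop)
    ?_ bound_int ?_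
  · exact main.2
  · -- bound on derivative
    refine ae_of_all _ fun ω w hw => ?_
    set x := X ω with hx
    have hnorm : ‖Complex.I * (θ:ℂ) * (x:ℂ) *
        Complex.exp (Complex.I * (θ:ℂ) * (w * (x:ℂ) + (Y ω:ℂ)))‖
        = |θ| * |x| * Real.exp (-(θ * w.im) * x) := by
      rw [norm_mul, aux_norm_exp θ w x (Y ω), norm_mul, norm_mul]
      simp
    rw [hnorm]
    have him : |w.im| ≤ |z.im| + 1 := by
      have h1 : |w.im - z.im| ≤ ‖w - z‖ := by
        simpa using Complex.abs_im_le_norm (w - z)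
      have h2 : ‖w - z‖ < 1 := by
        rwa [Metric.mem_ball, Complex.dist_eq] at hw
      calc |w.im| ≤ |w.im - z.im| + |z.im| := by
            simpa using abs_add_le (w.im - z.im) z.im
        _ ≤ |z.im| + 1 := by linarith
    have hexp : Real.exp (-(θ * w.im) * x) ≤ Real.exp (c0 * x) + Real.exp (-c0 * x) := by
      rcases le_total 0 x with hxpos | hxneg
      · have : -(θ * w.im) * x ≤ c0 * x := by
          apply mul_le_mul_of_nonneg_right _ hxpos
          calc -(θ * w.im) ≤ |θ * w.im| := neg_le_abs _
            _ = |θ| * |w.im| := abs_mul θ w.im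
            _ ≤ |θ| * (|z.im| + 1) := by
                exact mul_le_mul_of_nonneg_left him (abs_nonneg θ)
        exact le_trans (Real.exp_le_exp.2 this) (le_add_of_nonneg_right (Real.exp_nonneg _))
      · have hle : -c0 ≤ -(θ * w.im) := by
          have h3 : θ * w.im ≤ c0 := by
            refine le_trans (le_abs_self _) ?_
            rw [abs_mul, hc0]
            exact mul_le_mul_of_nonneg_left him (abs_nonneg θ)
          linarith
        have : -(θ * w.im) * x ≤ -c0 * x := mul_le_mul_of_nonpos_right hle hxneg
        exact le_trans (Real.exp_le_exp.2 this) (le_add_of_nonneg_left (Real.exp_nonneg _))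
    calc |θ| * |x| * Real.exp (-(θ * w.im) * x)
        ≤ |θ| * |x| * (Real.exp (c0 * x) + Real.exp (-c0 * x)) :=
          mul_le_mul_of_nonneg_left hexp (by positivity)
      _ = |θ| * (|x| * Real.exp (c0 * x)) + |θ| * (|x| * Real.exp (-c0 * x)) := by ring
  · -- differentiability
    refine ae_of_all _ fun ω w _ => ?_
    have h1 : HasDerivAt (fun w : ℂ => Complex.I * (θ:ℂ) * (w * (X ω:ℂ) + (Y ω:ℂ)))
        (Complex.I * (θ:ℂ) * (X ω:ℂ)) w := by
      simpa using (((hasDerivAt_id w).mul_const ((X ω:ℂ))).add_const ((Y ω:ℂ))).const_mul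
        (Complex.I * (θ:ℂ))
    have := h1.cexp
    exact this.congr_deriv (by ring)
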